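/- If Γ is a residually solvable group and its abelianization Γ/[Γ,Γ] is directly indecomposable, then Γ is directly indecomposable. -/

import Mathlib

open scoped commutatorElement

private theorem comm_cross {G : Type*} [Group G] (a b c d : G) (hab : Commute a b)
    (had : Commute a d) (hcb : Commute c b) (hcd : Commute c d) :
    ⁅a*b, c*d⁆ = ⁅a,c⁆ * ⁅b,d⁆ := by
  have h1 : Commute (a⁻¹*c⁻¹) b := hab.inv_left.mul_left hcb.inv_left
  have h2 : Commute (a⁻¹*c⁻¹) d := had.inv_left.mul_left hcd.inv_left
  have key : Commute (a⁻¹*c⁻¹) ⁅b,d⁆ := by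
    rw [commutatorElement_def]
    exact ((h1.mul_right h2).mul_right h1.inv_right).mul_right h2.inv_right
  have hbc := hcb.symm.eq
  have hinv : a⁻¹ * d⁻¹ = d⁻¹ * a⁻¹ := (had.inv_inv).eq
  have keq := key.eq
  simp only [commutatorElement_def, mul_inv_rev, mul_assoc] at keq ⊢
  rw [← mul_assoc b c, hbc, mul_assoc]
  congr 1; congr 1
  rw [← mul_assoc a⁻¹ d⁻¹, hinv, mul_assoc]
  exact keq.symm

private theorem perfect_le_derivedSeries {G : Type*} [Group G] {H : Subgroup G}
    (h : H ≤ ⁅H, H⁆) (n : ℕ) : H ≤ derivedSeries G n := by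
  induction n with
  | zero => exact le_top
  | succ n ih => rw [derivedSeries_succ]; exact h.trans (Subgroup.commutator_mono ih ih)

private theorem perfect_eq_bot {Γ : Type*} [Group Γ]
    (hres : ∀ γ : Γ, γ ≠ 1 → ∃ N : Subgroup Γ, N.Normal ∧
      (∀ _ : N.Normal, IsSolvable (Γ ⧸ N)) ∧ γ ∉ N)
    {H : Subgroup Γ} (h : H ≤ ⁅H, H⁆) : H = ⊥ := by
  rw [eq_bot_iff]
  intro x hx
  rw [Subgroup.mem_bot]
  by_contra hx1
  obtain ⟨N, hN, hsol, hxN⟩ := hres x hx1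
  haveI := hN
  haveI := hsol hN
  obtain ⟨k, hk⟩ := isSolvable_def (Γ ⧸ N) |>.mp (hsol hN)
  have hxk : x ∈ derivedSeries Γ k := perfect_le_derivedSeries h k hx
  have hmem : QuotientGroup.mk' N x ∈ derivedSeries (Γ ⧸ N) k :=
    map_derivedSeries_le_derivedSeries (QuotientGroup.mk' N) k ⟨x, hxk, rfl⟩
  rw [hk, Subgroup.mem_bot] at hmem
  exact hxN ((QuotientGroup.eq_one_iff x).mp hmem)

theorem residually_solvable_indecomposable {Γ : Type*} [Group Γ]
    (hres : ∀ γ : Γ, γ ≠ 1 → ∃ N : Subgroup Γ, N.Normal ∧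
      (∀ _ : N.Normal, IsSolvable (Γ ⧸ N)) ∧ γ ∉ N)
    (habnt : Nontrivial (Abelianization Γ))
    (hind : ∀ A B : Subgroup (Abelianization Γ), A ⊓ B = ⊥ → A ⊔ B = ⊤ → A = ⊥ ∨ B = ⊥) :
    Nontrivial Γ ∧
    ∀ N₁ N₂ : Subgroup Γ, N₁.Normal → N₂.Normal →
      N₁ ⊓ N₂ = ⊥ → N₁ ⊔ N₂ = ⊤ → N₁ = ⊥ ∨ N₂ = ⊥ := by
  have hker : ∀ x : Γ, Abelianization.of x = 1 ↔ x ∈ commutator Γ := fun x =>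
    QuotientGroup.eq_one_iff x
  have hsurj : Function.Surjective ((Abelianization.of : Γ →* Abelianization Γ)) := fun y =>
    QuotientGroup.induction_on y fun x => ⟨x, rfl⟩
  constructor
  · obtain ⟨x, y, hxy⟩ := habnt
    obtain ⟨x', rfl⟩ := hsurj x
    obtain ⟨y', rfl⟩ := hsurj y
    exact ⟨x', y', fun h => hxy (by rw [h])⟩
  intro N₁ N₂ h₁ h₂ hinf hsup
  haveI := h₁; haveI := h₂
  have hdisj : Disjoint N₁ N₂ := disjoint_iff.mpr hinf
  have hcomm : ∀ x ∈ N₁, ∀ y ∈ N₂, Commute x y := fun x hx y hy =>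
    Subgroup.commute_of_normal_of_disjoint N₁ N₂ h₁ h₂ hdisj x y hx hy
  -- the commutator subgroup splits
  have hC : commutator Γ ≤ ⁅N₁, N₁⁆ ⊔ ⁅N₂, N₂⁆ := by
    rw [commutator_def, ← hsup, Subgroup.commutator_le]
    intro g hg h hh
    obtain ⟨a, ha, b, hb, rfl⟩ := Set.mem_mul.mp
      ((Subgroup.mul_normal N₁ N₂ ▸ (SetLike.mem_coe.mpr hg)))
    obtain ⟨c, hc, d, hd, rfl⟩ := Set.mem_mul.mp
      ((Subgroup.mul_normal N₁ N₂ ▸ (SetLike.mem_coe.mpr hh)))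
    rw [comm_cross a b c d (hcomm a ha b hb) (hcomm a ha d hd)
      (hcomm c hc b hb) (hcomm c hc d hd)]
    exact mul_mem (Subgroup.mem_sup_left (Subgroup.commutator_mem_commutator ha hc))
      (Subgroup.mem_sup_right (Subgroup.commutator_mem_commutator hb hd))
  have hsplit : ∀ x ∈ commutator Γ, ∃ c₁ ∈ ⁅N₁, N₁⁆, ∃ c₂ ∈ ⁅N₂, N₂⁆, c₁ * c₂ = x := by
    intro x hx
    exact Set.mem_mul.mp (Subgroup.mul_normal ⁅N₁, N₁⁆ ⁅N₂, N₂⁆ ▸ SetLike.mem_coe.mpr (hC hx))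
  have h11 : ⁅N₁, N₁⁆ ≤ N₁ := Subgroup.commutator_le_left N₁ N₁
  have h22 : ⁅N₂, N₂⁆ ≤ N₂ := Subgroup.commutator_le_right N₂ N₂
  -- images in the abelianization
  set A := N₁.map ((Abelianization.of : Γ →* Abelianization Γ)) with hA
  set B := N₂.map ((Abelianization.of : Γ →* Abelianization Γ)) with hB
  have hABinf : A ⊓ B = ⊥ := by
    rw [eq_bot_iff]
    rintro x ⟨hxA, hxB⟩
    obtain ⟨n₁, hn₁, rfl⟩ := hxA
    obtain ⟨n₂, hn₂, heq⟩ := hxB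
    have hmem : n₁ * n₂⁻¹ ∈ commutator Γ := by
      rw [← hker, map_mul, map_inv, ← heq, mul_inv_cancel]
    obtain ⟨c₁, hc₁, c₂, hc₂, hcc⟩ := hsplit _ hmem
    have hN1 : c₁⁻¹ * n₁ ∈ N₁ := mul_mem (inv_mem (h11 hc₁)) hn₁
    have hN2 : c₁⁻¹ * n₁ ∈ N₂ := by
      have : c₁⁻¹ * n₁ = c₂ * n₂ := by
        have : c₂ = c₁⁻¹ * (n₁ * n₂⁻¹) := by rw [← hcc]; group
        rw [this]; group
      rw [this]; exact mul_mem (h22 hc₂) hn₂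
    have : c₁⁻¹ * n₁ = 1 := by
      have := hinf ▸ Subgroup.mem_inf.mpr ⟨hN1, hN2⟩
      rwa [Subgroup.mem_bot] at this
    have hn1c : n₁ = c₁ := (inv_mul_eq_one.mp this).symm
    rw [Subgroup.mem_bot, hker, hn1c]
    exact Subgroup.commutator_mono le_top le_top hc₁
  have hABsup : A ⊔ B = ⊤ := by
    rw [hA, hB, ← Subgroup.map_sup, hsup, Subgroup.map_top_of_surjective _ hsurj]
  rcases hind A B hABinf hABsup with hbot | hbot
  · left
    refine perfect_eq_bot hres (fun n hn => ?_)
    have hnC : n ∈ commutator Γ := by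
      rw [← hker]
      have : Abelianization.of n ∈ A := ⟨n, hn, rfl⟩
      rwa [hbot, Subgroup.mem_bot] at this
    obtain ⟨c₁, hc₁, c₂, hc₂, hcc⟩ := hsplit _ hnC
    have hN1 : c₁⁻¹ * n ∈ N₁ := mul_mem (inv_mem (h11 hc₁)) hn
    have hN2 : c₁⁻¹ * n ∈ N₂ := by
      have : c₁⁻¹ * n = c₂ := by rw [← hcc]; group
      rw [this]; exact h22 hc₂
    have h1 : c₁⁻¹ * n = 1 := by
      have := hinf ▸ Subgroup.mem_inf.mpr ⟨hN1, hN2⟩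
      rwa [Subgroup.mem_bot] at this
    rw [(inv_mul_eq_one.mp h1).symm]
    exact hc₁
  · right
    refine perfect_eq_bot hres (fun n hn => ?_)
    have hnC : n ∈ commutator Γ := by
      rw [← hker]
      have : Abelianization.of n ∈ B := ⟨n, hn, rfl⟩
      rwa [hbot, Subgroup.mem_bot] at this
    obtain ⟨c₁, hc₁, c₂, hc₂, hcc⟩ := hsplit _ hnC
    have hN2' : n * c₂⁻¹ ∈ N₂ := mul_mem hn (inv_mem (h22 hc₂))
    have hN1' : n * c₂⁻¹ ∈ N₁ := by
      have : n * c₂⁻¹ = c₁ := by rw [← hcc]; group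
      rw [this]; exact h11 hc₁
    have h1 : n * c₂⁻¹ = 1 := by
      have := hinf ▸ Subgroup.mem_inf.mpr ⟨hN1', hN2'⟩
      rwa [Subgroup.mem_bot] at this
    rw [(mul_inv_eq_one.mp h1)]
    exact hc₂
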